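/- Fix M, S, τ₁ > 0, A ∈ [-1,1], γ̄ ∈ ℝ, and a positive integer k with R(k;τ₁) ≥ 0, where R(k;τ₁) = AM⁴ + 2(A²-1)γ̄²Mπ³k + 2M²π²Sτ₁k² + 8π⁴Sk⁴, and set c := Aγ̄π/M + √(R(k;τ₁)/(2kM³π)). For a positive integer l ≠ k, λ_l(c,τ₁) = 0 (with λ defined as λ_j(c,τ₁) = 1 + (M²τ₁/(4π²))j⁻² + ((-c²M³ + 2Acγ̄M²π - γ̄²Mπ²)/(4π³S))j⁻³ + (AM⁴/(8π⁴S))j⁻⁴) if and only if p(l,k;τ₁) = -AM⁴ + 2klπ²S(4(k²+kl+l²)π² + M²τ₁) = 0. -/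

import Mathlib

open Real

/-- for `c = c₊(k;τ₁)` and a positive integer `l ≠ k`,
`λ_l(c,τ₁) = 0` iff `p(l,k;τ₁) = 0`. -/
theorem stmt3 (M S τ₁ A γ : ℝ) (hM : 0 < M) (hS : 0 < S) (hτ : 0 < τ₁)
    (hA : A ∈ Set.Icc (-1 : ℝ) 1) (k : ℕ) (hk : 1 ≤ k)
    (hR : A * M ^ 4 + 2 * (A ^ 2 - 1) * γ ^ 2 * M * π ^ 3 * (k : ℝ)
        + 2 * M ^ 2 * π ^ 2 * S * τ₁ * (k : ℝ) ^ 2 + 8 * π ^ 4 * S * (k : ℝ) ^ 4 ≥ 0)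
    (c : ℝ)
    (hc : c = A * γ * π / M
        + Real.sqrt ((A * M ^ 4 + 2 * (A ^ 2 - 1) * γ ^ 2 * M * π ^ 3 * (k : ℝ)
            + 2 * M ^ 2 * π ^ 2 * S * τ₁ * (k : ℝ) ^ 2 + 8 * π ^ 4 * S * (k : ℝ) ^ 4)
          / (2 * (k : ℝ) * M ^ 3 * π)))
    (l : ℕ) (hl : 1 ≤ l) (hlk : l ≠ k) :
    (1 + M ^ 2 * τ₁ / (4 * π ^ 2 * (l : ℝ) ^ 2)
        + (-c ^ 2 * M ^ 3 + 2 * A * c * γ * M ^ 2 * π - γ ^ 2 * M * π ^ 2)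
          / (4 * π ^ 3 * S * (l : ℝ) ^ 3)
        + A * M ^ 4 / (8 * π ^ 4 * S * (l : ℝ) ^ 4) = 0)
      ↔ -A * M ^ 4 + 2 * (k : ℝ) * (l : ℝ) * π ^ 2 * S
          * (4 * ((k : ℝ) ^ 2 + (k : ℝ) * (l : ℝ) + (l : ℝ) ^ 2) * π ^ 2 + M ^ 2 * τ₁) = 0 := by
  have hπ : (0:ℝ) < π := Real.pi_pos
  have hk0 : (0:ℝ) < (k:ℝ) := by exact_mod_cast hk
  have hl0 : (0:ℝ) < (l:ℝ) := by exact_mod_cast hl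
  set R : ℝ := A * M ^ 4 + 2 * (A ^ 2 - 1) * γ ^ 2 * M * π ^ 3 * (k : ℝ)
        + 2 * M ^ 2 * π ^ 2 * S * τ₁ * (k : ℝ) ^ 2 + 8 * π ^ 4 * S * (k : ℝ) ^ 4 with hRdef
  set s : ℝ := Real.sqrt (R / (2 * (k : ℝ) * M ^ 3 * π)) with hsdef
  have hdenpos : (0:ℝ) < 2 * (k : ℝ) * M ^ 3 * π := by positivity
  have hs2 : s ^ 2 = R / (2 * (k : ℝ) * M ^ 3 * π) :=
    Real.sq_sqrt (div_nonneg hR (le_of_lt hdenpos))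
  have hnum : -c ^ 2 * M ^ 3 + 2 * A * c * γ * M ^ 2 * π - γ ^ 2 * M * π ^ 2
      = (A ^ 2 - 1) * γ ^ 2 * M * π ^ 2 - R / (2 * (k:ℝ) * π) := by
    rw [hc]
    have hM' : M ≠ 0 := ne_of_gt hM
    have hk' : (k:ℝ) ≠ 0 := ne_of_gt hk0
    have hπ' : π ≠ 0 := ne_of_gt hπ
    have hs2' : s ^ 2 * (2 * (k : ℝ) * M ^ 3 * π) = R := by
      rw [hs2]; field_simp
    field_simp
    linear_combination (-1 : ℝ) * hs2'
  have hlk' : (l:ℝ) - (k:ℝ) ≠ 0 := by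
    have : (l:ℝ) ≠ (k:ℝ) := by exact_mod_cast hlk
    exact sub_ne_zero.mpr this
  have hfac : (0:ℝ) < 8 * π ^ 4 * S * (k:ℝ) * (l:ℝ) ^ 4 := by positivity
  have key : (1 + M ^ 2 * τ₁ / (4 * π ^ 2 * (l : ℝ) ^ 2)
        + (-c ^ 2 * M ^ 3 + 2 * A * c * γ * M ^ 2 * π - γ ^ 2 * M * π ^ 2)
          / (4 * π ^ 3 * S * (l : ℝ) ^ 3)
        + A * M ^ 4 / (8 * π ^ 4 * S * (l : ℝ) ^ 4)) * (8 * π ^ 4 * S * (k:ℝ) * (l:ℝ) ^ 4)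
      = ((l:ℝ) - (k:ℝ)) * (-A * M ^ 4 + 2 * (k : ℝ) * (l : ℝ) * π ^ 2 * S
          * (4 * ((k : ℝ) ^ 2 + (k : ℝ) * (l : ℝ) + (l : ℝ) ^ 2) * π ^ 2 + M ^ 2 * τ₁)) := by
    rw [hnum, hRdef]
    have hS' : S ≠ 0 := ne_of_gt hS
    have hk' : (k:ℝ) ≠ 0 := ne_of_gt hk0
    have hl' : (l:ℝ) ≠ 0 := ne_of_gt hl0
    have hπ' : π ≠ 0 := ne_of_gt hπ
    field_simp
    ring
  constructor
  · intro h
    rw [h, zero_mul] at key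
    rcases mul_eq_zero.mp key.symm with h1 | h2
    · exact absurd h1 hlk'
    · exact h2
  · intro h
    rw [h, mul_zero] at key
    rcases mul_eq_zero.mp key with h1 | h2
    · exact h1
    · exact absurd h2 (ne_of_gt hfac)
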